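/- Every tableau FOLP_CS-consistent set of sentences of FOLP can be extended to a set of closed Par-formulas that is tableau FOLP_CS-consistent, maximal, and E-complete. -/

import Mathlib

open scoped Classical

/-- Justification terms of FOLP, built from justification variables `jvar i`,
justification constants `jconst i`, and the operations `+`, `·`, `!`, `genₓ`. -/
inductive Tm : Type
  | jvar : ℕ → Tm
  | jconst : ℕ → Tm
  | plus : Tm → Tm → Tm
  | app : Tm → Tm → Tm
  | bang : Tm → Tm
  | gen : ℕ → Tm → Tm
  deriving DecidableEq

/-- FOLP formulas with extra individual constants from `K` (`K`-formulas).
Individual variables are natural numbers; an argument `Sum.inl x` is an individual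
variable, `Sum.inr a` is an element of `K`.  Predicate symbols are indexed by `ℕ`.
Plain FOLP formulas are `Fm Empty`, Par-formulas are `Fm ℕ` (the parameters being a
separate copy of ℕ, namely the `Sum.inr` part), and `D`-formulas are `Fm D`.
`just t X A` is the justification assertion `t :_X A`. -/
inductive Fm (K : Type) : Type
  | pred : ℕ → List (ℕ ⊕ K) → Fm K
  | neg : Fm K → Fm K
  | imp : Fm K → Fm K → Fm K
  | all : ℕ → Fm K → Fm K
  | ex : ℕ → Fm K → Fm K
  | just : Tm → Finset (ℕ ⊕ K) → Fm K → Fm K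

namespace Fm

variable {K K' : Type}

/-- Free individual variables of a `K`-formula.  Recall that
`FVar (t :_X A) = X` (more precisely, the individual-variable part of `X`). -/
noncomputable def fvar : Fm K → Finset ℕ
  | pred _ args => (args.filterMap Sum.getLeft?).toFinset
  | neg A => A.fvar
  | imp A B => A.fvar ∪ B.fvar
  | all x A => A.fvar.erase x
  | ex x A => A.fvar.erase x
  | just _ X _ => (X.toList.filterMap Sum.getLeft?).toFinset

/-- The elements of `K` occurring in a `K`-formula (for `K = Par` this is `Par(A)`,
for `K = D` this is `D(A)`). -/
noncomputable def kocc : Fm K → Finset K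
  | pred _ args => (args.filterMap Sum.getRight?).toFinset
  | neg A => A.kocc
  | imp A B => A.kocc ∪ B.kocc
  | all _ A => A.kocc
  | ex _ A => A.kocc
  | just _ X A => A.kocc ∪ (X.toList.filterMap Sum.getRight?).toFinset

/-- A `K`-formula is closed if it contains no free occurrences of individual variables. -/
def Closed (A : Fm K) : Prop := A.fvar = ∅

/-- Action of a partial substitution (of elements of `K` for individual variables)
on variables/`K`-elements. -/
def subK (σ : ℕ → Option K) : ℕ ⊕ K → ℕ ⊕ K
  | .inl x => (σ x).elim (.inl x) .inr
  | .inr a => .inr a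

/-- Simultaneous substitution of elements of `K` for free individual variables.
In `t :_X A` only the variables belonging to `X` are free, so only those get
substituted (both inside `X` and inside `A`). -/
noncomputable def msubst (σ : ℕ → Option K) : Fm K → Fm K
  | pred Q args => pred Q (args.map (subK σ))
  | neg A => neg (A.msubst σ)
  | imp A B => imp (A.msubst σ) (B.msubst σ)
  | all x A => all x (A.msubst fun y => if y = x then none else σ y)
  | ex x A => ex x (A.msubst fun y => if y = x then none else σ y)
  | just t X A =>
      just t (X.image (subK σ)) (A.msubst fun y => if Sum.inl y ∈ X then σ y else none)

/-- `A.subst1 x a` is `A(a)`, i.e. `A{x/a}`: the result of replacing all free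
occurrences of the individual variable `x` by the element `a : K`. -/
noncomputable def subst1 (x : ℕ) (a : K) (A : Fm K) : Fm K :=
  A.msubst fun y => if y = x then some a else none

/-- Action of a variable-for-variable substitution on arguments. -/
def subVV (x y : ℕ) : ℕ ⊕ K → ℕ ⊕ K
  | .inl z => if z = x then .inl y else .inl z
  | .inr a => .inr a

/-- `A.vsubst x y` is `A{x/y}`: substitution of the individual variable `y` for
the free occurrences of the individual variable `x`. -/
noncomputable def vsubst (x y : ℕ) : Fm K → Fm K
  | pred Q args => pred Q (args.map (subVV x y))
  | neg A => neg (A.vsubst x y)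
  | imp A B => imp (A.vsubst x y) (B.vsubst x y)
  | all z A => if z = x then all z A else all z (A.vsubst x y)
  | ex z A => if z = x then ex z A else ex z (A.vsubst x y)
  | just t X A =>
      if Sum.inl x ∈ X then just t (X.image (subVV x y)) (A.vsubst x y) else just t X A

/-- `FreeFor y x A`: the variable `y` is substitutable for the variable `x` in `A`
(no free occurrence of `x` lies in the scope of a quantifier binding `y`). -/
def FreeFor (y x : ℕ) : Fm K → Prop
  | pred _ _ => True
  | neg A => FreeFor y x A
  | imp A B => FreeFor y x A ∧ FreeFor y x B
  | all z A => x = z ∨ x ∉ A.fvar ∨ (y ≠ z ∧ FreeFor y x A)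
  | ex z A => x = z ∨ x ∉ A.fvar ∨ (y ≠ z ∧ FreeFor y x A)
  | just _ X A => Sum.inl x ∈ X → FreeFor y x A

/-- Action of a renaming on arguments. -/
def subR (σ : ℕ → ℕ) : ℕ ⊕ K → ℕ ⊕ K
  | .inl x => .inl (σ x)
  | .inr a => .inr a

/-- Renaming of all (free and bound) individual variables. -/
noncomputable def rename (σ : ℕ → ℕ) : Fm K → Fm K
  | pred Q args => pred Q (args.map (subR σ))
  | neg A => neg (A.rename σ)
  | imp A B => imp (A.rename σ) (B.rename σ)
  | all x A => all (σ x) (A.rename σ)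
  | ex x A => ex (σ x) (A.rename σ)
  | just t X A => just t (X.image (subR σ)) (A.rename σ)

/-- Mapping the extra individual constants of a `K`-formula along `f : K → K'`. -/
noncomputable def kmap (f : K → K') : Fm K → Fm K'
  | pred Q args => pred Q (args.map (Sum.map id f))
  | neg A => neg (A.kmap f)
  | imp A B => imp (A.kmap f) (B.kmap f)
  | all x A => all x (A.kmap f)
  | ex x A => ex x (A.kmap f)
  | just t X A => just t (X.image (Sum.map id f)) (A.kmap f)

/-- A size measure used for the well-founded recursion defining truth. -/
noncomputable def size : Fm K → ℕ
  | pred _ _ => 0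
  | neg A => A.size + 1
  | imp A B => A.size + B.size + 1
  | all _ A => A.size + 1
  | ex _ A => A.size + 1
  | just _ _ A => A.size + A.fvar.card + 1


theorem fvar_msubst_subset (σ : ℕ → Option K) (A : Fm K) :
    (A.msubst σ).fvar ⊆ A.fvar := by
  induction A generalizing σ with
  | pred Q args =>
      intro y hy
      simp only [msubst, fvar, List.mem_toFinset, List.mem_filterMap, List.mem_map] at hy ⊢
      obtain ⟨s, ⟨a, ha, rfl⟩, hget⟩ := hy
      cases a with
      | inl z =>
          cases hσ : σ z with
          | none =>
              simp [subK, hσ] at hget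
              exact ⟨Sum.inl z, ha, by simp [hget]⟩
          | some b => simp [subK, hσ] at hget
      | inr b => simp [subK] at hget
  | neg A ih => exact ih σ
  | imp A B ihA ihB =>
      simp only [msubst, fvar]
      exact Finset.union_subset_union (ihA σ) (ihB σ)
  | all x A ih =>
      simp only [msubst, fvar]
      exact Finset.erase_subset_erase x (ih _)
  | ex x A ih =>
      simp only [msubst, fvar]
      exact Finset.erase_subset_erase x (ih _)
  | just t X A ih =>
      intro y hy
      simp only [msubst, fvar, List.mem_toFinset, List.mem_filterMap,
        Finset.mem_toList, Finset.mem_image] at hy ⊢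
      obtain ⟨s, ⟨a, ha, rfl⟩, hget⟩ := hy
      cases a with
      | inl z =>
          cases hσ : σ z with
          | none =>
              refine ⟨Sum.inl z, ha, ?_⟩
              simp only [subK, hσ, Option.elim] at hget
              simpa using hget
          | some b => simp [subK, hσ] at hget
      | inr b => simp [subK] at hget

theorem size_msubst_le (σ : ℕ → Option K) (A : Fm K) :
    (A.msubst σ).size ≤ A.size := by
  induction A generalizing σ with
  | pred Q args => simp [msubst, size]
  | neg A ih => simpa [msubst, size] using ih σ
  | imp A B ihA ihB =>
      simp only [msubst, size]
      have := ihA σ; have := ihB σ; omega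
  | all x A ih => simpa [msubst, size] using ih _
  | ex x A ih => simpa [msubst, size] using ih _
  | just t X A ih =>
      simp only [msubst, size]
      have h1 := ih (fun y => if Sum.inl y ∈ X then σ y else none)
      have h2 := Finset.card_le_card
        (fvar_msubst_subset (fun y => if Sum.inl y ∈ X then σ y else none) A)
      omega

theorem size_subst1_le (x : ℕ) (a : K) (A : Fm K) : (A.subst1 x a).size ≤ A.size :=
  size_msubst_le _ A


/-- `∀A`, the universal closure of `A`. -/
noncomputable def univClosure (A : Fm K) : Fm K :=
  (A.fvar.sort (· ≤ ·)).foldr Fm.all A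

theorem size_foldr_all (l : List ℕ) (A : Fm K) :
    (l.foldr Fm.all A).size = A.size + l.length := by
  induction l with
  | nil => simp
  | cons z l ih => simp only [List.foldr, size, ih, List.length_cons]; omega

theorem size_univClosure (A : Fm K) :
    A.univClosure.size = A.size + A.fvar.card := by
  simp [univClosure, size_foldr_all, Finset.length_sort]

end Fm

/-- Embedding plain FOLP formulas into `K`-formulas. -/
noncomputable def toK {K : Type} : Fm Empty → Fm K := Fm.kmap (fun a => a.elim)

/-- Two FOLP formulas are variable variants if each can be turned into the other
by a renaming of free and bound individual variables. -/
def VariableVariant (A B : Fm Empty) : Prop := ∃ σ : Equiv.Perm ℕ, B = A.rename σ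

/-- The axioms of FOLP: a complete list of first order axiom schemes together
with the justification axiom schemes Ctr, Exp, Sum, jK, jT, j4, Gen. -/
inductive FOLPAxiom : Fm Empty → Prop
  | p1 (A B : Fm Empty) : FOLPAxiom (A.imp (B.imp A))
  | p2 (A B C : Fm Empty) : FOLPAxiom ((A.imp (B.imp C)).imp ((A.imp B).imp (A.imp C)))
  | p3 (A B : Fm Empty) : FOLPAxiom (((A.neg).imp (B.neg)).imp (B.imp A))
  | allElim (x y : ℕ) (A : Fm Empty) : Fm.FreeFor y x A → FOLPAxiom ((Fm.all x A).imp (A.vsubst x y))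
  | allImp (x : ℕ) (A B : Fm Empty) : x ∉ A.fvar →
      FOLPAxiom ((Fm.all x (A.imp B)).imp (A.imp (Fm.all x B)))
  | exIntro (x y : ℕ) (A : Fm Empty) : Fm.FreeFor y x A → FOLPAxiom ((A.vsubst x y).imp (Fm.ex x A))
  | exElim (x : ℕ) (A B : Fm Empty) : x ∉ B.fvar →
      FOLPAxiom ((Fm.all x (A.imp B)).imp ((Fm.ex x A).imp B))
  | ctr (t : Tm) (X : Finset (ℕ ⊕ Empty)) (A : Fm Empty) (y : ℕ) : Sum.inl y ∉ X → y ∉ A.fvar →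
      FOLPAxiom ((Fm.just t (insert (Sum.inl y) X) A).imp (Fm.just t X A))
  | exp (t : Tm) (X : Finset (ℕ ⊕ Empty)) (A : Fm Empty) (y : ℕ) : Sum.inl y ∉ X →
      FOLPAxiom ((Fm.just t X A).imp (Fm.just t (insert (Sum.inl y) X) A))
  | sum1 (s t : Tm) (X : Finset (ℕ ⊕ Empty)) (A : Fm Empty) : FOLPAxiom ((Fm.just s X A).imp (Fm.just (Tm.plus s t) X A))
  | sum2 (s t : Tm) (X : Finset (ℕ ⊕ Empty)) (A : Fm Empty) : FOLPAxiom ((Fm.just s X A).imp (Fm.just (Tm.plus t s) X A))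
  | jK (s t : Tm) (X : Finset (ℕ ⊕ Empty)) (A B : Fm Empty) : FOLPAxiom ((Fm.just s X (A.imp B)).imp
      ((Fm.just t X A).imp (Fm.just (Tm.app s t) X B)))
  | jT (t : Tm) (X : Finset (ℕ ⊕ Empty)) (A : Fm Empty) : FOLPAxiom ((Fm.just t X A).imp A)
  | j4 (t : Tm) (X : Finset (ℕ ⊕ Empty)) (A : Fm Empty) : FOLPAxiom ((Fm.just t X A).imp (Fm.just (Tm.bang t) X (Fm.just t X A)))
  | gen (t : Tm) (X : Finset (ℕ ⊕ Empty)) (A : Fm Empty) (x : ℕ) : Sum.inl x ∉ X →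
      FOLPAxiom ((Fm.just t X A).imp (Fm.just (Tm.gen x t) X (Fm.all x A)))

/-- A constant specification is a set of pairs `(c, A)`, read `c : A`
(that is, `c :_∅ A`), where `A` is an axiom instance. -/
def ConstantSpec (CS : Set (ℕ × Fm Empty)) : Prop := ∀ p ∈ CS, FOLPAxiom p.2

/-- `CS` is axiomatically appropriate: every axiom instance has a constant justifying it. -/
def AxiomaticallyAppropriate (CS : Set (ℕ × Fm Empty)) : Prop :=
  ∀ A, FOLPAxiom A → ∃ c, (c, A) ∈ CS

/-- `CS` is variant closed. -/
def VariantClosed (CS : Set (ℕ × Fm Empty)) : Prop :=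
  ∀ c A B, VariableVariant A B → ((c, A) ∈ CS ↔ (c, B) ∈ CS)

/-- Derivability in the axiomatic system `FOLP_CS`:  axioms, axiom necessitation
restricted to `CS`, modus ponens, and universal generalization. -/
inductive Deriv (CS : Set (ℕ × Fm Empty)) : Fm Empty → Prop
  | ax {A : Fm Empty} : FOLPAxiom A → Deriv CS A
  | an {c : ℕ} {A : Fm Empty} : (c, A) ∈ CS → Deriv CS (Fm.just (Tm.jconst c) ∅ A)
  | mp {A B : Fm Empty} : Deriv CS (A.imp B) → Deriv CS A → Deriv CS B
  | ug {A : Fm Empty} (x : ℕ) : Deriv CS A → Deriv CS (Fm.all x A)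

/-- A Mkrtychev model of `FOLP_CS` with domain `D`:  an interpretation `I` of the
predicate symbols and an admissible evidence function `E` satisfying E1–E6. -/
structure MModel (CS : Set (ℕ × Fm Empty)) (D : Type) : Type where
  dom_nonempty : Nonempty D
  I : ℕ → Set (List D)
  E : Tm → Set (Fm D)
  e1 : ∀ c A, (c, A) ∈ CS → toK A ∈ E (Tm.jconst c)
  e2 : ∀ s t (A B : Fm D), Fm.imp A B ∈ E s → A ∈ E t → B ∈ E (Tm.app s t)
  e3 : ∀ s t, E s ∪ E t ⊆ E (Tm.plus s t)
  e4 : ∀ t (A : Fm D) (X : Finset D), A ∈ E t → A.kocc ⊆ X →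
      Fm.just t (X.image Sum.inr) A ∈ E (Tm.bang t)
  e5 : ∀ t (x : ℕ) (A : Fm D), A ∈ E t → Fm.all x A ∈ E (Tm.gen x t)
  e6 : ∀ t (A : Fm D) (x : ℕ) (a : D), A ∈ E t → A.subst1 x a ∈ E t

/-- Truth of a (closed) `D`-formula in a Mkrtychev model. -/
noncomputable def MModel.Sat {CS : Set (ℕ × Fm Empty)} {D : Type} (M : MModel CS D) :
    Fm D → Prop
  | .pred Q args => ∃ as : List D, args = as.map Sum.inr ∧ as ∈ M.I Q
  | .neg A => ¬ M.Sat A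
  | .imp A B => M.Sat A → M.Sat B
  | .all x A => ∀ a : D, M.Sat (A.subst1 x a)
  | .ex x A => ∃ a : D, M.Sat (A.subst1 x a)
  | .just t _ A => A ∈ M.E t ∧ M.Sat A.univClosure
  termination_by F => F.size
  decreasing_by
    all_goals simp only [Fm.size, Fm.size_univClosure]
    all_goals first
      | omega
      | exact Nat.lt_succ_of_le (Fm.size_subst1_le _ _ _)

/-- Truth of an FOLP sentence in a Mkrtychev model. -/
noncomputable def MModel.SatSentence {CS : Set (ℕ × Fm Empty)} {D : Type}
    (M : MModel CS D) (F : Fm Empty) : Prop := M.Sat (toK F)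

/-- A sentence is `FOLP_CS`-valid if it is true in every Mkrtychev model of `FOLP_CS`. -/
def FOLPValid (CS : Set (ℕ × Fm Empty)) (F : Fm Empty) : Prop :=
  ∀ (D : Type) (M : MModel CS D), M.SatSentence F

/-- Satisfiability of a closed Par-formula `A(u₁,…,uₙ)` in a model:
`M ⊩ A(a₁,…,aₙ)` for some `a₁,…,aₙ ∈ D`. -/
noncomputable def MModel.SatPar {CS : Set (ℕ × Fm Empty)} {D : Type}
    (M : MModel CS D) (F : Fm ℕ) : Prop :=
  ∃ g : ℕ → D, M.Sat (F.kmap g)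

/-- `X ⊆ Par`: the set `X` consists of parameters only. -/
def XPar (X : Finset (ℕ ⊕ ℕ)) : Prop := ∀ s ∈ X, ∃ u : ℕ, s = Sum.inr u

/-- One application of an FOLP tableau rule to a branch (represented by the set `S`
of closed Par-formulas occurring on it), producing the list of extended branches
(one branch for a non-branching rule, two for a branching rule). -/
inductive TabRule : Set (Fm ℕ) → List (Set (Fm ℕ)) → Prop
  | fneg {S A} : Fm.neg (Fm.neg A) ∈ S → TabRule S [insert A S]
  | timp {S A B} : Fm.imp A B ∈ S → TabRule S [insert (Fm.neg A) S, insert B S]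
  | fimp {S A B} : Fm.neg (Fm.imp A B) ∈ S → TabRule S [insert A (insert (Fm.neg B) S)]
  | tall {S x A} (u : ℕ) : Fm.all x A ∈ S → TabRule S [insert (A.subst1 x u) S]
  | fex {S x A} (u : ℕ) : Fm.neg (Fm.ex x A) ∈ S →
      TabRule S [insert (Fm.neg (A.subst1 x u)) S]
  | tex {S x A} (u : ℕ) : Fm.ex x A ∈ S → (∀ F ∈ S, u ∉ F.kocc) →
      TabRule S [insert (A.subst1 x u) S]
  | fall {S x A} (u : ℕ) : Fm.neg (Fm.all x A) ∈ S → (∀ F ∈ S, u ∉ F.kocc) →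
      TabRule S [insert (Fm.neg (A.subst1 x u)) S]
  | tcolon {S t X A} : Fm.just t X A ∈ S → XPar X → TabRule S [insert A.univClosure S]
  | fplus {S t s X A} : Fm.neg (Fm.just (Tm.plus t s) X A) ∈ S → XPar X →
      TabRule S [insert (Fm.neg (Fm.just t X A)) (insert (Fm.neg (Fm.just s X A)) S)]
  | fapp {S s t X B} (A : Fm ℕ) : Fm.neg (Fm.just (Tm.app s t) X B) ∈ S → XPar X →
      (∀ u ∈ A.kocc, Sum.inr u ∈ X) →
      TabRule S [insert (Fm.neg (Fm.just s X (A.imp B))) S,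
                 insert (Fm.neg (Fm.just t X A)) S]
  | fbang {S t X A} : Fm.neg (Fm.just (Tm.bang t) X (Fm.just t X A)) ∈ S → XPar X →
      TabRule S [insert (Fm.neg (Fm.just t X A)) S]
  | ctr {S t X A} (u : ℕ) : Fm.neg (Fm.just t X A) ∈ S → XPar X → Sum.inr u ∉ X →
      TabRule S [insert (Fm.neg (Fm.just t (insert (Sum.inr u) X) A)) S]
  | exp {S t X A} (u : ℕ) : Fm.neg (Fm.just t (insert (Sum.inr u) X) A) ∈ S →
      XPar X → Sum.inr u ∉ X → u ∉ A.kocc →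
      TabRule S [insert (Fm.neg (Fm.just t X A)) S]
  | ins {S t X A} (x u : ℕ) : Fm.neg (Fm.just t X (A.subst1 x u)) ∈ S → XPar X →
      TabRule S [insert (Fm.neg (Fm.just t X A)) S]
  | genx {S t X A x} : Fm.neg (Fm.just (Tm.gen x t) X (Fm.all x A)) ∈ S → XPar X →
      TabRule S [insert (Fm.neg (Fm.just t X A)) S]

/-- `ClosedTableau CS S`: there is a closed `FOLP_CS`-tableau beginning with the
formulas of `S`.  A branch closes if it contains both `A` and `¬A`, or contains
`¬c:A` with `c:A ∈ CS`. -/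
inductive ClosedTableau (CS : Set (ℕ × Fm Empty)) : Set (Fm ℕ) → Prop
  | close {S A} : A ∈ S → Fm.neg A ∈ S → ClosedTableau CS S
  | closeCS {S c A} : (c, A) ∈ CS →
      Fm.neg (Fm.just (Tm.jconst c) ∅ (toK A)) ∈ S → ClosedTableau CS S
  | step {S l} : TabRule S l → (∀ S' ∈ l, ClosedTableau CS S') → ClosedTableau CS S

/-- An `FOLP_CS`-tableau proof of the sentence `F`: a closed tableau beginning
with `¬F`. -/
def TabProof (CS : Set (ℕ × Fm Empty)) (F : Fm Empty) : Prop :=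
  ClosedTableau CS {Fm.neg (toK F)}

/-- A set of closed Par-formulas is tableau `FOLP_CS`-consistent if no finite
subset of it has a closed `FOLP_CS`-tableau. -/
def TabConsistent (CS : Set (ℕ × Fm Empty)) (Γ : Set (Fm ℕ)) : Prop :=
  ∀ S : Set (Fm ℕ), S ⊆ Γ → S.Finite → ¬ ClosedTableau CS S

/-- `Γ` is maximal: it has no proper tableau consistent extension by closed Par-formulas. -/
def MaximalCons (CS : Set (ℕ × Fm Empty)) (Γ : Set (Fm ℕ)) : Prop :=
  TabConsistent CS Γ ∧
    ∀ Δ : Set (Fm ℕ), Γ ⊆ Δ → (∀ F ∈ Δ, F.Closed) → TabConsistent CS Δ → Δ = Γ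

/-- `Γ` is E-complete (with parameters as witnesses). -/
def EComplete (Γ : Set (Fm ℕ)) : Prop :=
  (∀ (x : ℕ) (A : Fm ℕ), Fm.ex x A ∈ Γ → ∃ u : ℕ, A.subst1 x u ∈ Γ) ∧
  (∀ (x : ℕ) (A : Fm ℕ), Fm.neg (Fm.all x A) ∈ Γ → ∃ u : ℕ, Fm.neg (A.subst1 x u) ∈ Γ)

/-- The interpretation of the canonical model determined by `Γ`:
`I(Q) = { (u₁,…,uₙ) | Q(u₁,…,uₙ) ∈ Γ }`. -/
def canI (Γ : Set (Fm ℕ)) (Q : ℕ) : Set (List ℕ) :=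
  {us | Fm.pred Q (us.map Sum.inr) ∈ Γ}

/-- The evidence function of the canonical model determined by `Γ`:
`E(t) = { A | ¬ t:_{Par(A)} A ∉ Γ }`. -/
def canE (Γ : Set (Fm ℕ)) (t : Tm) : Set (Fm ℕ) :=
  {A | Fm.neg (Fm.just t (A.kocc.image Sum.inr) A) ∉ Γ}


section Aux

open Fm

variable {K K' K'' : Type}

lemma mem_rights {X : Finset (ℕ ⊕ K)} {a : K} :
    a ∈ (X.toList.filterMap Sum.getRight?).toFinset ↔ Sum.inr a ∈ X := by
  simp only [List.mem_toFinset, List.mem_filterMap, Finset.mem_toList]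
  constructor
  · rintro ⟨s, hs, h⟩; cases s <;> simp_all [Sum.getRight?]
  · intro h; exact ⟨Sum.inr a, h, rfl⟩

lemma mem_lefts {X : Finset (ℕ ⊕ K)} {x : ℕ} :
    x ∈ (X.toList.filterMap Sum.getLeft?).toFinset ↔ Sum.inl x ∈ X := by
  simp only [List.mem_toFinset, List.mem_filterMap, Finset.mem_toList]
  constructor
  · rintro ⟨s, hs, h⟩; cases s <;> simp_all [Sum.getLeft?]
  · intro h; exact ⟨Sum.inl x, h, rfl⟩

lemma mem_image_inl [DecidableEq (ℕ ⊕ K')] {X : Finset (ℕ ⊕ K)} {f : K → K'} {x : ℕ} :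
    Sum.inl x ∈ X.image (Sum.map id f) ↔ Sum.inl x ∈ X := by
  simp only [Finset.mem_image]
  constructor
  · rintro ⟨s, hs, h⟩; cases s <;> simp_all
  · intro h; exact ⟨Sum.inl x, h, rfl⟩

lemma mem_image_inr [DecidableEq (ℕ ⊕ K')] {X : Finset (ℕ ⊕ K)} {f : K → K'} {a : K'} :
    Sum.inr a ∈ X.image (Sum.map id f) ↔ ∃ b, Sum.inr b ∈ X ∧ f b = a := by
  simp only [Finset.mem_image]
  constructor
  · rintro ⟨s, hs, h⟩
    cases s with
    | inl x => simp at h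
    | inr b => simp at h; exact ⟨b, hs, h⟩
  · rintro ⟨b, hb, rfl⟩; exact ⟨Sum.inr b, hb, rfl⟩

lemma filterMap_getLeft?_map (f : K → K') (l : List (ℕ ⊕ K)) :
    (l.map (Sum.map id f)).filterMap Sum.getLeft? = l.filterMap Sum.getLeft? := by
  induction l with
  | nil => rfl
  | cons s l ih =>
      simp only [List.map_cons, List.filterMap_cons]
      cases s with
      | inl x => simp only [Sum.map_inl, id_eq, Sum.getLeft?_inl, ih]
      | inr a => simp only [Sum.map_inr, Sum.getLeft?_inr, ih]

lemma fvar_kmap (f : K → K') (A : Fm K) : (A.kmap f).fvar = A.fvar := by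
  induction A with
  | pred Q args => simp only [kmap, fvar, filterMap_getLeft?_map]
  | neg A ih => simpa [kmap, fvar] using ih
  | imp A B ihA ihB => simp [kmap, fvar, ihA, ihB]
  | all x A ih => simp [kmap, fvar, ih]
  | ex x A ih => simp [kmap, fvar, ih]
  | just t X A ih =>
      simp only [kmap, fvar]
      ext y
      simp [mem_lefts, mem_image_inl]

lemma filterMap_getRight?_map (f : K → K') (l : List (ℕ ⊕ K)) :
    (l.map (Sum.map id f)).filterMap Sum.getRight? = (l.filterMap Sum.getRight?).map f := by
  induction l with
  | nil => rfl
  | cons s l ih =>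
      simp only [List.map_cons, List.filterMap_cons]
      cases s with
      | inl x => simp only [Sum.map_inl, id_eq, Sum.getLeft?_inl, Sum.getRight?_inl, ih]
      | inr a => simp only [Sum.map_inr, Sum.getRight?_inr, ih, List.map_cons]

lemma kocc_kmap (f : K → K') (A : Fm K) : (A.kmap f).kocc = A.kocc.image f := by
  induction A with
  | pred Q args =>
      simp only [kmap, kocc, filterMap_getRight?_map]
      ext a
      simp only [List.mem_toFinset, List.mem_map, Finset.mem_image]
  | neg A ih => simpa [kmap, kocc] using ih
  | imp A B ihA ihB => simp [kmap, kocc, ihA, ihB, Finset.image_union]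
  | all x A ih => simp [kmap, kocc, ih]
  | ex x A ih => simp [kmap, kocc, ih]
  | just t X A ih =>
      simp only [kmap, kocc, ih, Finset.image_union]
      congr 1
      ext a
      simp only [mem_rights, Finset.mem_image]
      constructor
      · rintro ⟨s, hs, h⟩
        cases s with
        | inl x => simp at h
        | inr b =>
            simp only [Sum.map_inr, Sum.inr.injEq] at h
            exact ⟨b, hs, h⟩
      · rintro ⟨b, hb, rfl⟩; exact ⟨Sum.inr b, hb, rfl⟩

lemma kmap_id (A : Fm K) : A.kmap id = A := by
  induction A with
  | pred Q args => simp [kmap]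
  | neg A ih => simp [kmap, ih]
  | imp A B ihA ihB => simp [kmap, ihA, ihB]
  | all x A ih => simp [kmap, ih]
  | ex x A ih => simp [kmap, ih]
  | just t X A ih => simp [kmap, ih]

lemma kmap_congr {f g : K → K'} (A : Fm K) (h : ∀ a ∈ A.kocc, f a = g a) :
    A.kmap f = A.kmap g := by
  induction A with
  | pred Q args =>
      simp only [kmap]
      congr 1
      apply List.map_congr_left
      intro s hs
      cases s with
      | inl x => rfl
      | inr a =>
          have : a ∈ (Fm.pred (K := K) Q args).kocc := by
            simp only [kocc, List.mem_toFinset, List.mem_filterMap]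
            exact ⟨Sum.inr a, hs, rfl⟩
          simp [h a this]
  | neg A ih => simp only [kmap]; rw [ih h]
  | imp A B ihA ihB =>
      simp only [kmap]
      rw [ihA fun a ha => h a (by simp [kocc, ha]),
          ihB fun a ha => h a (by simp [kocc, ha])]
  | all x A ih => simp only [kmap]; rw [ih h]
  | ex x A ih => simp only [kmap]; rw [ih h]
  | just t X A ih =>
      simp only [kmap]
      have h1 : ∀ a ∈ A.kocc, f a = g a := fun a ha => h a (by simp [kocc, ha])
      rw [ih h1]
      congr 1
      apply Finset.image_congr
      intro s hs
      cases s with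
      | inl x => rfl
      | inr a =>
          have : a ∈ (Fm.just t X A).kocc := by
            simp only [kocc, Finset.mem_union]
            exact Or.inr (mem_rights.mpr hs)
          simp [h a this]

lemma kmap_kmap (f : K → K') (g : K' → K'') (A : Fm K) :
    (A.kmap f).kmap g = A.kmap (g ∘ f) := by
  induction A with
  | pred Q args =>
      simp only [kmap, List.map_map]
      congr 1
      apply List.map_congr_left
      intro s _; cases s <;> rfl
  | neg A ih => simp [kmap, ih]
  | imp A B ihA ihB => simp [kmap, ihA, ihB]
  | all x A ih => simp [kmap, ih]
  | ex x A ih => simp [kmap, ih]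
  | just t X A ih =>
      simp only [kmap, ih, Finset.image_image]
      congr 1
      apply Finset.image_congr
      intro s _; cases s <;> rfl

lemma kmap_toK (f : ℕ → ℕ) (A : Fm Empty) : (toK A).kmap f = toK A := by
  simp only [toK, kmap_kmap]
  congr 1
  funext a; exact a.elim

lemma kocc_toK (A : Fm Empty) : (toK (K := ℕ) A).kocc = ∅ := by
  simp only [toK, kocc_kmap]
  have : A.kocc = ∅ := Finset.eq_empty_of_isEmpty _
  simp [this]

lemma fvar_toK (A : Fm Empty) : (toK (K := ℕ) A).fvar = A.fvar := fvar_kmap _ _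

lemma kmap_msubst (f : K → K') (σ : ℕ → Option K) (A : Fm K) :
    (A.msubst σ).kmap f = (A.kmap f).msubst (fun y => (σ y).map f) := by
  induction A generalizing σ with
  | pred Q args =>
      simp only [msubst, kmap, List.map_map]
      congr 1
      apply List.map_congr_left
      intro s _
      cases s with
      | inl x =>
          cases h : σ x <;> simp [subK, Function.comp, h]
      | inr a => simp [subK, Function.comp]
  | neg A ih => simp [msubst, kmap, ih]
  | imp A B ihA ihB => simp [msubst, kmap, ihA, ihB]
  | all x A ih =>
      simp only [msubst, kmap, ih]
      have : (fun y => Option.map f (if y = x then none else σ y)) =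
          (fun y => if y = x then none else Option.map f (σ y)) := by
        funext y; by_cases h : y = x <;> simp [h]
      rw [this]
  | ex x A ih =>
      simp only [msubst, kmap, ih]
      have : (fun y => Option.map f (if y = x then none else σ y)) =
          (fun y => if y = x then none else Option.map f (σ y)) := by
        funext y; by_cases h : y = x <;> simp [h]
      rw [this]
  | just t X A ih =>
      simp only [msubst, kmap, ih, Finset.image_image]
      congr 1
      · apply Finset.image_congr
        intro s _
        cases s with
        | inl x =>
            cases h : σ x <;> simp [subK, Function.comp, h]
        | inr a => simp [subK, Function.comp]
      · have : (fun y => Option.map f (if Sum.inl y ∈ X then σ y else none)) =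
            (fun y => if Sum.inl y ∈ X.image (Sum.map id f) then Option.map f (σ y) else none) := by
          funext y
          by_cases h : Sum.inl y ∈ X
          · simp [h, mem_image_inl.mpr h]
          · simp [h, fun hc => h (mem_image_inl.mp hc), mem_image_inl]
        rw [this]

lemma kmap_subst1 (f : K → K') (x : ℕ) (a : K) (A : Fm K) :
    (A.subst1 x a).kmap f = (A.kmap f).subst1 x (f a) := by
  simp only [Fm.subst1, kmap_msubst]
  congr 1
  funext y
  by_cases h : y = x <;> simp [h]

lemma kmap_foldr_all (f : K → K') (l : List ℕ) (A : Fm K) :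
    (l.foldr Fm.all A).kmap f = l.foldr Fm.all (A.kmap f) := by
  induction l with
  | nil => rfl
  | cons z l ih => simp [kmap, ih]

lemma kmap_univClosure (f : K → K') (A : Fm K) :
    A.univClosure.kmap f = (A.kmap f).univClosure := by
  simp [Fm.univClosure, kmap_foldr_all, fvar_kmap]

lemma fvar_msubst_none (σ : ℕ → Option K) (A : Fm K) :
    ∀ y ∈ (A.msubst σ).fvar, y ∈ A.fvar ∧ σ y = none := by
  induction A generalizing σ with
  | pred Q args =>
      intro y hy
      simp only [msubst, fvar, List.mem_toFinset, List.mem_filterMap, List.mem_map] at hy ⊢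
      obtain ⟨s, ⟨a, ha, rfl⟩, hget⟩ := hy
      cases a with
      | inl z =>
          cases hσ : σ z with
          | none =>
              simp only [subK, hσ, Option.elim, Sum.getLeft?_inl, Option.some_inj] at hget
              subst hget
              exact ⟨⟨Sum.inl z, ha, rfl⟩, hσ⟩
          | some b => simp [subK, hσ] at hget
      | inr b => simp [subK] at hget
  | neg A ih => exact ih σ
  | imp A B ihA ihB =>
      intro y hy
      simp only [msubst, fvar, Finset.mem_union] at hy ⊢
      rcases hy with hy | hy
      · obtain ⟨h1, h2⟩ := ihA σ y hy; exact ⟨Or.inl h1, h2⟩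
      · obtain ⟨h1, h2⟩ := ihB σ y hy; exact ⟨Or.inr h1, h2⟩
  | all x A ih =>
      intro y hy
      simp only [msubst, fvar, Finset.mem_erase] at hy ⊢
      obtain ⟨hne, hy⟩ := hy
      obtain ⟨h1, h2⟩ := ih _ y hy
      simp only [if_neg hne] at h2
      exact ⟨⟨hne, h1⟩, h2⟩
  | ex x A ih =>
      intro y hy
      simp only [msubst, fvar, Finset.mem_erase] at hy ⊢
      obtain ⟨hne, hy⟩ := hy
      obtain ⟨h1, h2⟩ := ih _ y hy
      simp only [if_neg hne] at h2
      exact ⟨⟨hne, h1⟩, h2⟩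
  | just t X A ih =>
      intro y hy
      simp only [msubst, fvar, mem_lefts] at hy ⊢
      simp only [Finset.mem_image] at hy
      obtain ⟨s, hs, hsy⟩ := hy
      cases s with
      | inl z =>
          cases hσ : σ z with
          | none =>
              simp only [subK, hσ, Option.elim, Sum.inl.injEq] at hsy
              subst hsy
              exact ⟨hs, hσ⟩
          | some b => simp [subK, hσ] at hsy
      | inr b => simp [subK] at hsy

lemma fvar_subst1_subset (x : ℕ) (a : K) (A : Fm K) :
    (A.subst1 x a).fvar ⊆ A.fvar.erase x := by
  intro y hy
  obtain ⟨h1, h2⟩ := fvar_msubst_none _ A y hy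
  have hne : y ≠ x := by
    intro h; subst h; simp at h2
  exact Finset.mem_erase.mpr ⟨hne, h1⟩

lemma closed_subst1_of_closed_ex {x : ℕ} {a : K} {A : Fm K}
    (h : (Fm.ex x A).Closed) : (A.subst1 x a).Closed := by
  have : A.fvar.erase x = ∅ := h
  exact Finset.subset_empty.mp (this ▸ fvar_subst1_subset x a A)

lemma closed_subst1_of_closed_all {x : ℕ} {a : K} {A : Fm K}
    (h : (Fm.all x A).Closed) : (A.subst1 x a).Closed := by
  have : A.fvar.erase x = ∅ := h
  exact Finset.subset_empty.mp (this ▸ fvar_subst1_subset x a A)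

lemma closed_neg {A : Fm K} (h : A.Closed) : (Fm.neg A).Closed := h

private def tmEnc : Tm → ℕ
  | .jvar n => Nat.pair 0 n
  | .jconst n => Nat.pair 1 n
  | .plus s t => Nat.pair 2 (Nat.pair (tmEnc s) (tmEnc t))
  | .app s t => Nat.pair 3 (Nat.pair (tmEnc s) (tmEnc t))
  | .bang t => Nat.pair 4 (tmEnc t)
  | .gen x t => Nat.pair 5 (Nat.pair x (tmEnc t))

private lemma tmEnc_inj : Function.Injective tmEnc := by
  intro s t
  induction s generalizing t <;> cases t <;>
    simp_all [tmEnc, Nat.pair_eq_pair] <;>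
    aesop

private noncomputable def fmEnc : Fm ℕ → ℕ
  | .pred Q args => Nat.pair 0 (Nat.pair Q (Encodable.encode args))
  | .neg A => Nat.pair 1 (fmEnc A)
  | .imp A B => Nat.pair 2 (Nat.pair (fmEnc A) (fmEnc B))
  | .all x A => Nat.pair 3 (Nat.pair x (fmEnc A))
  | .ex x A => Nat.pair 4 (Nat.pair x (fmEnc A))
  | .just t X A => Nat.pair 5 (Nat.pair (tmEnc t) (Nat.pair (Encodable.encode X) (fmEnc A)))

private lemma fmEnc_inj : Function.Injective fmEnc := by
  intro A B
  induction A generalizing B <;> cases B <;>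
    simp_all [fmEnc, Nat.pair_eq_pair, tmEnc_inj.eq_iff, Encodable.encode_injective.eq_iff] <;>
    aesop

instance : Countable (Fm ℕ) := ⟨fmEnc, fmEnc_inj⟩

lemma mem_image_any {α β : Type} {D : DecidableEq β} {f : α → β} {X : Finset α} {b : β} :
    b ∈ @Finset.image _ _ D f X ↔ ∃ a ∈ X, f a = b := by
  letI := D
  exact Finset.mem_image

lemma finsetInsert_irrel {α : Type} (D D' : DecidableEq α) :
    (@Finset.instInsert α D) = (@Finset.instInsert α D') := by
  rw [Subsingleton.elim D D']

lemma image_irrel {α β : Type} (D D' : DecidableEq β) (f : α → β) (X : Finset α) :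
    @Finset.image _ _ D f X = @Finset.image _ _ D' f X := by
  rw [Subsingleton.elim D D']

lemma exists_fresh {T : Set (Fm ℕ)} (hT : T.Finite) : ∃ v, ∀ F ∈ T, v ∉ F.kocc := by
  have hfin : (⋃ F ∈ T, (F.kocc : Set ℕ)).Finite :=
    hT.biUnion (fun F _ => F.kocc.finite_toSet)
  obtain ⟨v, hv⟩ := hfin.infinite_compl.nonempty
  exact ⟨v, fun F hF hvF => hv (Set.mem_biUnion hF (by simpa using hvF))⟩

lemma xpar_image {D : DecidableEq (ℕ ⊕ ℕ)} {X : Finset (ℕ ⊕ ℕ)} (f : ℕ → ℕ) (h : XPar X) :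
    XPar (@Finset.image _ _ D (Sum.map id f) X) := by
  intro s hs
  rw [mem_image_any] at hs
  obtain ⟨s', hs', rfl⟩ := hs
  obtain ⟨u, rfl⟩ := h s' hs'
  exact ⟨f u, rfl⟩

lemma inr_notmem_image {D : DecidableEq (ℕ ⊕ ℕ)} {X : Finset (ℕ ⊕ ℕ)} {f : ℕ → ℕ} (hf : Function.Injective f)
    {u : ℕ} (h : Sum.inr u ∉ X) : Sum.inr (f u) ∉ @Finset.image _ _ D (Sum.map id f) X := by
  intro hc
  rw [mem_image_any] at hc
  obtain ⟨s, hs, heq⟩ := hc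
  cases s with
  | inl x => simp at heq
  | inr b =>
      simp only [Sum.map_inr, Sum.inr.injEq] at heq
      exact h (hf heq ▸ hs)

lemma sub_insert {S T : Set (Fm ℕ)} {π : ℕ → ℕ} (hsub : ∀ F ∈ S, F.kmap π ∈ T) (F : Fm ℕ) :
    ∀ G ∈ insert F S, G.kmap π ∈ insert (F.kmap π) T := by
  intro G hG
  rcases Set.mem_insert_iff.mp hG with rfl | hG'
  · exact Set.mem_insert _ _
  · exact Set.mem_insert_of_mem _ (hsub G hG')

lemma sub_insert2 {S T : Set (Fm ℕ)} {π : ℕ → ℕ} (hsub : ∀ F ∈ S, F.kmap π ∈ T)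
    (F F' : Fm ℕ) :
    ∀ G ∈ insert F (insert F' S), G.kmap π ∈ insert (F.kmap π) (insert (F'.kmap π) T) := by
  intro G hG
  rcases Set.mem_insert_iff.mp hG with rfl | hG'
  · exact Set.mem_insert _ _
  · exact Set.mem_insert_of_mem _ (sub_insert hsub F' G hG')

lemma tab_weaken {CS : Set (ℕ × Fm Empty)} {S : Set (Fm ℕ)} (h : ClosedTableau CS S) :
    ∀ (π : ℕ ≃ ℕ) (T : Set (Fm ℕ)), T.Finite → (∀ F ∈ S, F.kmap π ∈ T) →
      ClosedTableau CS T := by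
  induction h with
  | @close S A hA hnA =>
      intro π T _ hsub
      have h1 := hsub _ hA
      have h2 := hsub _ hnA
      simp only [Fm.kmap] at h2
      exact ClosedTableau.close h1 h2
  | @closeCS S c A hcs hmem =>
      intro π T _ hsub
      have h1 := hsub _ hmem
      simp only [Fm.kmap, Finset.image_empty, kmap_toK] at h1
      exact ClosedTableau.closeCS hcs h1
  | @step S l r _ ih =>
      intro π T hTfin hsub
      cases r with
      | @fneg A hmem =>
          have h1 := hsub _ hmem
          simp only [Fm.kmap] at h1
          refine ClosedTableau.step (TabRule.fneg h1) ?_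
          intro S' hS'
          simp only [List.mem_singleton] at hS'
          subst hS'
          exact ih _ (by simp) π _ (hTfin.insert _) (sub_insert hsub _)
      | @timp A B hmem =>
          have h1 := hsub _ hmem
          simp only [Fm.kmap] at h1
          refine ClosedTableau.step (TabRule.timp h1) ?_
          intro S' hS'
          simp only [List.mem_cons, List.not_mem_nil, or_false] at hS'
          rcases hS' with rfl | rfl
          · have hbr := sub_insert hsub (Fm.neg A)
            simp only [Fm.kmap] at hbr
            exact ih _ (by simp) π _ (hTfin.insert _) hbr
          · exact ih _ (by simp) π _ (hTfin.insert _) (sub_insert hsub B)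
      | @fimp A B hmem =>
          have h1 := hsub _ hmem
          simp only [Fm.kmap] at h1
          refine ClosedTableau.step (TabRule.fimp h1) ?_
          intro S' hS'
          simp only [List.mem_singleton] at hS'
          subst hS'
          have hbr := sub_insert2 hsub A (Fm.neg B)
          simp only [Fm.kmap] at hbr
          exact ih _ (by simp) π _ ((hTfin.insert _).insert _) hbr
      | @tall x A u hmem =>
          have h1 := hsub _ hmem
          simp only [Fm.kmap] at h1
          refine ClosedTableau.step (TabRule.tall (π u) h1) ?_
          intro S' hS'
          simp only [List.mem_singleton] at hS'
          subst hS'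
          have hbr := sub_insert hsub (A.subst1 x u)
          rw [kmap_subst1] at hbr
          exact ih _ (by simp) π _ (hTfin.insert _) hbr
      | @fex x A u hmem =>
          have h1 := hsub _ hmem
          simp only [Fm.kmap] at h1
          refine ClosedTableau.step (TabRule.fex (π u) h1) ?_
          intro S' hS'
          simp only [List.mem_singleton] at hS'
          subst hS'
          have hbr := sub_insert hsub (Fm.neg (A.subst1 x u))
          simp only [Fm.kmap] at hbr
          rw [kmap_subst1] at hbr
          exact ih _ (by simp) π _ (hTfin.insert _) hbr
      | @tex x A u hmem hfr =>
          obtain ⟨v, hv⟩ := exists_fresh hTfin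
          set π' : ℕ ≃ ℕ := π.trans (Equiv.swap (π u) v) with hπ'
          have hππ : ∀ (F : Fm ℕ), F ∈ S → u ∉ F.kocc → F.kmap π' = F.kmap π := by
            intro F hF huF
            apply kmap_congr
            intro a ha
            have h1 : π a ≠ π u := fun h => huF (π.injective h ▸ ha)
            have h2 : π a ≠ v := by
              intro h
              apply hv _ (hsub F hF)
              rw [kocc_kmap, mem_image_any]
              exact ⟨a, ha, h⟩
            simp [hπ', Equiv.trans_apply, Equiv.swap_apply_of_ne_of_ne h1 h2]
          have hkey : ∀ F ∈ S, F.kmap π' = F.kmap π :=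
            fun F hF => hππ F hF (hfr F hF)
          have hexT : Fm.ex x (A.kmap π) ∈ T := by
            have := hsub _ hmem
            simpa only [Fm.kmap] using this
          have huA : u ∉ A.kocc := by
            have := hfr _ hmem
            simpa [Fm.kocc] using this
          have hA' : A.kmap π' = A.kmap π := by
            have := hππ (Fm.ex x A) hmem (by simpa [Fm.kocc] using huA)
            simpa only [Fm.kmap, Fm.ex.injEq, true_and] using this
          have hu' : π' u = v := by simp [hπ', Equiv.trans_apply]
          have hbr : ∀ G ∈ insert (A.subst1 x u) S,
              G.kmap π' ∈ insert ((A.kmap π).subst1 x v) T := by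
            intro G hG
            rcases Set.mem_insert_iff.mp hG with rfl | hG'
            · rw [kmap_subst1, hA', hu']
              exact Set.mem_insert _ _
            · rw [hkey G hG']
              exact Set.mem_insert_of_mem _ (hsub G hG')
          have hcl : ClosedTableau CS (insert ((A.kmap π).subst1 x v) T) :=
            ih _ (by simp) π' _ (hTfin.insert _) hbr
          refine ClosedTableau.step (TabRule.tex v hexT hv) ?_
          intro S' hS'
          simp only [List.mem_singleton] at hS'
          subst hS'
          exact hcl
      | @fall x A u hmem hfr =>
          obtain ⟨v, hv⟩ := exists_fresh hTfin
          set π' : ℕ ≃ ℕ := π.trans (Equiv.swap (π u) v) with hπ'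
          have hππ : ∀ (F : Fm ℕ), F ∈ S → u ∉ F.kocc → F.kmap π' = F.kmap π := by
            intro F hF huF
            apply kmap_congr
            intro a ha
            have h1 : π a ≠ π u := fun h => huF (π.injective h ▸ ha)
            have h2 : π a ≠ v := by
              intro h
              apply hv _ (hsub F hF)
              rw [kocc_kmap, mem_image_any]
              exact ⟨a, ha, h⟩
            simp [hπ', Equiv.trans_apply, Equiv.swap_apply_of_ne_of_ne h1 h2]
          have hkey : ∀ F ∈ S, F.kmap π' = F.kmap π :=
            fun F hF => hππ F hF (hfr F hF)
          have hallT : Fm.neg (Fm.all x (A.kmap π)) ∈ T := by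
            have := hsub _ hmem
            simpa only [Fm.kmap] using this
          have huA : u ∉ A.kocc := by
            have := hfr _ hmem
            simpa [Fm.kocc] using this
          have hA' : A.kmap π' = A.kmap π := by
            have := hππ (Fm.neg (Fm.all x A)) hmem (by simpa [Fm.kocc] using huA)
            simpa only [Fm.kmap, Fm.neg.injEq, Fm.all.injEq, true_and] using this
          have hu' : π' u = v := by simp [hπ', Equiv.trans_apply]
          have hbr : ∀ G ∈ insert (Fm.neg (A.subst1 x u)) S,
              G.kmap π' ∈ insert (Fm.neg ((A.kmap π).subst1 x v)) T := by
            intro G hG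
            rcases Set.mem_insert_iff.mp hG with rfl | hG'
            · have : (Fm.neg (A.subst1 x u)).kmap π' =
                  Fm.neg ((A.kmap π).subst1 x v) := by
                simp only [Fm.kmap, kmap_subst1, hA', hu']
              rw [this]
              exact Set.mem_insert _ _
            · rw [hkey G hG']
              exact Set.mem_insert_of_mem _ (hsub G hG')
          have hcl : ClosedTableau CS (insert (Fm.neg ((A.kmap π).subst1 x v)) T) :=
            ih _ (by simp) π' _ (hTfin.insert _) hbr
          refine ClosedTableau.step (TabRule.fall v hallT hv) ?_
          intro S' hS'
          simp only [List.mem_singleton] at hS'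
          subst hS'
          exact hcl
      | @tcolon t X A hmem hX =>
          have h1 := hsub _ hmem
          simp only [Fm.kmap] at h1
          refine ClosedTableau.step (TabRule.tcolon h1 (xpar_image π hX)) ?_
          intro S' hS'
          simp only [List.mem_singleton] at hS'
          subst hS'
          have hbr := sub_insert hsub A.univClosure
          rw [kmap_univClosure] at hbr
          exact ih _ (by simp) π _ (hTfin.insert _) hbr
      | @fplus t' s' X A hmem hX =>
          have h1 := hsub _ hmem
          simp only [Fm.kmap] at h1
          refine ClosedTableau.step (TabRule.fplus h1 (xpar_image π hX)) ?_
          intro S' hS'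
          simp only [List.mem_singleton] at hS'
          subst hS'
          have hbr := sub_insert2 hsub (Fm.neg (Fm.just t' X A)) (Fm.neg (Fm.just s' X A))
          simp only [Fm.kmap] at hbr
          exact ih _ (by simp) π _ ((hTfin.insert _).insert _) hbr
      | @fapp s' t' X B A hmem hX hcond =>
          have h1 := hsub _ hmem
          simp only [Fm.kmap] at h1
          refine ClosedTableau.step (TabRule.fapp (A.kmap π) h1 (xpar_image π hX) ?_) ?_
          · intro w hw
            rw [kocc_kmap, mem_image_any] at hw
            obtain ⟨b, hb, rfl⟩ := hw
            rw [mem_image_any]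
            exact ⟨Sum.inr b, hcond b hb, rfl⟩
          intro S' hS'
          simp only [List.mem_cons, List.not_mem_nil, or_false] at hS'
          rcases hS' with rfl | rfl
          · have hbr := sub_insert hsub (Fm.neg (Fm.just s' X (A.imp B)))
            simp only [Fm.kmap] at hbr
            exact ih _ (by simp) π _ (hTfin.insert _) hbr
          · have hbr := sub_insert hsub (Fm.neg (Fm.just t' X A))
            simp only [Fm.kmap] at hbr
            exact ih _ (by simp) π _ (hTfin.insert _) hbr
      | @fbang t X A hmem hX =>
          have h1 := hsub _ hmem
          simp only [Fm.kmap] at h1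
          refine ClosedTableau.step (TabRule.fbang h1 (xpar_image π hX)) ?_
          intro S' hS'
          simp only [List.mem_singleton] at hS'
          subst hS'
          have hbr := sub_insert hsub (Fm.neg (Fm.just t X A))
          simp only [Fm.kmap] at hbr
          exact ih _ (by simp) π _ (hTfin.insert _) hbr
      | @ctr t X A u hmem hX hnot =>
          have h1 := hsub _ hmem
          simp only [Fm.kmap] at h1
          have hbr := sub_insert hsub (Fm.neg (Fm.just t (insert (Sum.inr u) X) A))
          simp only [Fm.kmap, Finset.image_insert, Sum.map_inr] at hbr
          have hcl := ih _ (List.mem_singleton.mpr rfl) π _ (hTfin.insert _) hbr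
          refine ClosedTableau.step
            (TabRule.ctr (π u) h1 (xpar_image π hX) (inr_notmem_image π.injective hnot)) ?_
          intro S' hS'
          simp only [List.mem_singleton] at hS'
          subst hS'
          convert hcl using 5 <;>
            first
              | rfl
              | exact finsetInsert_irrel _ _
              | exact image_irrel _ _ _ _
              | exact Subsingleton.elim _ _
      | @exp t X A u hmem hX hnot hko =>
          have h1 := hsub _ hmem
          simp only [Fm.kmap, Finset.image_insert, Sum.map_inr] at h1
          have h1' : Fm.neg (Fm.just t (insert (Sum.inr (π u))
              (X.image (Sum.map id (π : ℕ → ℕ)))) (A.kmap (π : ℕ → ℕ))) ∈ T := by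
            convert h1 using 4 <;>
              first
                | rfl
                | exact finsetInsert_irrel _ _
                | exact image_irrel _ _ _ _
                | exact Subsingleton.elim _ _
          have hko' : π u ∉ (A.kmap (π : ℕ → ℕ)).kocc := by
            intro hc
            rw [kocc_kmap, mem_image_any] at hc
            obtain ⟨b, hb, hfb⟩ := hc
            exact hko (π.injective hfb ▸ hb)
          have hbr := sub_insert hsub (Fm.neg (Fm.just t X A))
          simp only [Fm.kmap] at hbr
          have hcl := ih _ (List.mem_singleton.mpr rfl) π _ (hTfin.insert _) hbr
          refine ClosedTableau.step
            (TabRule.exp (π u) h1' (xpar_image π hX) (inr_notmem_image π.injective hnot) hko') ?_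
          intro S' hS'
          simp only [List.mem_singleton] at hS'
          subst hS'
          convert hcl using 5 <;>
            first
              | rfl
              | exact finsetInsert_irrel _ _
              | exact image_irrel _ _ _ _
              | exact Subsingleton.elim _ _
      | @ins t X A x u hmem hX =>
          have h1 := hsub _ hmem
          simp only [Fm.kmap] at h1
          rw [kmap_subst1] at h1
          refine ClosedTableau.step (TabRule.ins x (π u) h1 (xpar_image π hX)) ?_
          intro S' hS'
          simp only [List.mem_singleton] at hS'
          subst hS'
          have hbr := sub_insert hsub (Fm.neg (Fm.just t X A))
          simp only [Fm.kmap] at hbr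
          exact ih _ (by simp) π _ (hTfin.insert _) hbr
      | @genx t X A x hmem hX =>
          have h1 := hsub _ hmem
          simp only [Fm.kmap] at h1
          refine ClosedTableau.step (TabRule.genx h1 (xpar_image π hX)) ?_
          intro S' hS'
          simp only [List.mem_singleton] at hS'
          subst hS'
          have hbr := sub_insert hsub (Fm.neg (Fm.just t X A))
          simp only [Fm.kmap] at hbr
          exact ih _ (by simp) π _ (hTfin.insert _) hbr

lemma tabcons_mono {CS : Set (ℕ × Fm Empty)} {Γ Δ : Set (Fm ℕ)} (h : Γ ⊆ Δ)
    (hΔ : TabConsistent CS Δ) : TabConsistent CS Γ :=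
  fun S hS hf => hΔ S (hS.trans h) hf

lemma witness_consistent_ex {CS : Set (ℕ × Fm Empty)} {Γ : Set (Fm ℕ)}
    (hΓ : TabConsistent CS Γ) {x : ℕ} {A : Fm ℕ} {u : ℕ}
    (hex : Fm.ex x A ∈ Γ) (hu : ∀ F ∈ Γ, u ∉ F.kocc) :
    TabConsistent CS (insert (A.subst1 x u) Γ) := by
  intro S hS hfin hct
  set T : Set (Fm ℕ) := insert (Fm.ex x A) (S \ {A.subst1 x u}) with hT
  have hTsub : T ⊆ Γ := by
    intro F hF
    rcases Set.mem_insert_iff.mp hF with rfl | hF'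
    · exact hex
    · rcases Set.mem_insert_iff.mp (hS hF'.1) with rfl | hg
      · exact absurd rfl hF'.2
      · exact hg
  have hfin' : (S \ {A.subst1 x u}).Finite := hfin.diff
  have hTfin : T.Finite := hfin'.insert _
  apply hΓ T hTsub hTfin
  refine ClosedTableau.step
    (TabRule.tex u (Set.mem_insert _ _) (fun F hF => hu F (hTsub hF))) ?_
  intro S' hS'
  simp only [List.mem_singleton] at hS'
  subst hS'
  refine tab_weaken hct (Equiv.refl ℕ) _ (hTfin.insert _) ?_
  intro F hF
  rw [Equiv.coe_refl, kmap_id]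
  by_cases hFe : F = A.subst1 x u
  · exact hFe ▸ Set.mem_insert _ _
  · exact Set.mem_insert_of_mem _ (Set.mem_insert_of_mem _ ⟨hF, hFe⟩)

lemma witness_consistent_all {CS : Set (ℕ × Fm Empty)} {Γ : Set (Fm ℕ)}
    (hΓ : TabConsistent CS Γ) {x : ℕ} {A : Fm ℕ} {u : ℕ}
    (hall : Fm.neg (Fm.all x A) ∈ Γ) (hu : ∀ F ∈ Γ, u ∉ F.kocc) :
    TabConsistent CS (insert (Fm.neg (A.subst1 x u)) Γ) := by
  intro S hS hfin hct
  set T : Set (Fm ℕ) := insert (Fm.neg (Fm.all x A)) (S \ {Fm.neg (A.subst1 x u)}) with hT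
  have hTsub : T ⊆ Γ := by
    intro F hF
    rcases Set.mem_insert_iff.mp hF with rfl | hF'
    · exact hall
    · rcases Set.mem_insert_iff.mp (hS hF'.1) with rfl | hg
      · exact absurd rfl hF'.2
      · exact hg
  have hfin' : (S \ {Fm.neg (A.subst1 x u)}).Finite := hfin.diff
  have hTfin : T.Finite := hfin'.insert _
  apply hΓ T hTsub hTfin
  refine ClosedTableau.step
    (TabRule.fall u (Set.mem_insert _ _) (fun F hF => hu F (hTsub hF))) ?_
  intro S' hS'
  simp only [List.mem_singleton] at hS'
  subst hS'
  refine tab_weaken hct (Equiv.refl ℕ) _ (hTfin.insert _) ?_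
  intro F hF
  rw [Equiv.coe_refl, kmap_id]
  by_cases hFe : F = Fm.neg (A.subst1 x u)
  · exact hFe ▸ Set.mem_insert _ _
  · exact Set.mem_insert_of_mem _ (Set.mem_insert_of_mem _ ⟨hF, hFe⟩)

/-- The parameters occurring in a set of Par-formulas form a finite set. -/
def PFin (Γ : Set (Fm ℕ)) : Prop := (⋃ F ∈ Γ, (F.kocc : Set ℕ)).Finite

lemma exists_fresh_of_pfin {Γ : Set (Fm ℕ)} (h : PFin Γ) : ∃ u, ∀ F ∈ Γ, u ∉ F.kocc := by
  obtain ⟨v, hv⟩ := h.infinite_compl.nonempty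
  exact ⟨v, fun F hF hvF => hv (Set.mem_biUnion hF (by simpa using hvF))⟩

noncomputable def freshPar (Γ : Set (Fm ℕ)) : ℕ :=
  if h : ∃ u, ∀ F ∈ Γ, u ∉ F.kocc then h.choose else 0

lemma freshPar_spec {Γ : Set (Fm ℕ)} (h : ∃ u, ∀ F ∈ Γ, u ∉ F.kocc) :
    ∀ F ∈ Γ, freshPar Γ ∉ F.kocc := by
  rw [freshPar, dif_pos h]
  exact h.choose_spec

/-- The witnesses added along with a formula. -/
noncomputable def witSet (Γ : Set (Fm ℕ)) : Fm ℕ → Set (Fm ℕ)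
  | .ex x A => {A.subst1 x (freshPar Γ)}
  | .neg (.all x A) => {Fm.neg (A.subst1 x (freshPar Γ))}
  | _ => ∅

/-- One step of the Lindenbaum construction. -/
noncomputable def extendStep (CS : Set (ℕ × Fm Empty)) (Γ : Set (Fm ℕ)) (F : Fm ℕ) :
    Set (Fm ℕ) :=
  if F.Closed ∧ TabConsistent CS (insert F Γ) then witSet (insert F Γ) F ∪ insert F Γ else Γ

lemma subset_extendStep {CS Γ F} : Γ ⊆ extendStep CS Γ F := by
  rw [extendStep]
  split_ifs
  · exact (Set.subset_insert _ _).trans Set.subset_union_right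
  · exact subset_rfl

lemma mem_extendStep {CS Γ F} (hcl : Fm.Closed F) (hcons : TabConsistent CS (insert F Γ)) :
    F ∈ extendStep CS Γ F := by
  rw [extendStep, if_pos ⟨hcl, hcons⟩]
  exact Set.mem_union_right _ (Set.mem_insert _ _)

lemma witSet_subset {Γ F} : ∀ G ∈ witSet Γ F,
    (∃ x A, F = Fm.ex x A ∧ G = A.subst1 x (freshPar Γ)) ∨
    (∃ x A, F = Fm.neg (Fm.all x A) ∧ G = Fm.neg (A.subst1 x (freshPar Γ))) := by
  intro G hG
  cases F with
  | ex x A =>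
      simp only [witSet] at hG
      exact Or.inl ⟨x, A, rfl, Set.mem_singleton_iff.mp hG⟩
  | neg B =>
      cases B with
      | all x A =>
          simp only [witSet] at hG
          exact Or.inr ⟨x, A, rfl, Set.mem_singleton_iff.mp hG⟩
      | pred Q args => simp [witSet] at hG
      | neg C => simp [witSet] at hG
      | imp C D => simp [witSet] at hG
      | ex y C => simp [witSet] at hG
      | just t X C => simp [witSet] at hG
  | pred Q args => simp [witSet] at hG
  | imp C D => simp [witSet] at hG
  | all y C => simp [witSet] at hG
  | just t X C => simp [witSet] at hG

lemma pfin_insert {Γ : Set (Fm ℕ)} (h : PFin Γ) (F : Fm ℕ) : PFin (insert F Γ) := by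
  rw [PFin, Set.biUnion_insert]
  exact (F.kocc.finite_toSet).union h

lemma extendStep_consistent {CS Γ F} (hP : PFin Γ) (hΓ : TabConsistent CS Γ) :
    TabConsistent CS (extendStep CS Γ F) := by
  rw [extendStep]
  split_ifs with h
  · obtain ⟨hcl, hcons⟩ := h
    have hPF : PFin (insert F Γ) := pfin_insert hP F
    have hfr := freshPar_spec (exists_fresh_of_pfin hPF)
    cases F with
    | ex x A =>
        simp only [witSet]
        rw [Set.singleton_union]
        exact witness_consistent_ex hcons (Set.mem_insert _ _) hfr
    | neg B =>
        cases B with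
        | all x A =>
            simp only [witSet]
            rw [Set.singleton_union]
            exact witness_consistent_all hcons (Set.mem_insert _ _) hfr
        | pred Q args => simpa [witSet] using hcons
        | neg C => simpa [witSet] using hcons
        | imp C D => simpa [witSet] using hcons
        | ex y C => simpa [witSet] using hcons
        | just t X C => simpa [witSet] using hcons
    | pred Q args => simpa [witSet] using hcons
    | imp C D => simpa [witSet] using hcons
    | all y C => simpa [witSet] using hcons
    | just t X C => simpa [witSet] using hcons
  · exact hΓ

lemma extendStep_closed {CS Γ F} (hΓ : ∀ G ∈ Γ, Fm.Closed G) :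
    ∀ G ∈ extendStep CS Γ F, Fm.Closed G := by
  intro G hG
  rw [extendStep] at hG
  split_ifs at hG with h
  · rcases hG with hG | hG
    · rcases witSet_subset G hG with ⟨x, A, rfl, rfl⟩ | ⟨x, A, rfl, rfl⟩
      · exact closed_subst1_of_closed_ex h.1
      · exact closed_subst1_of_closed_all h.1
    · rcases Set.mem_insert_iff.mp hG with rfl | hG'
      · exact h.1
      · exact hΓ G hG'
  · exact hΓ G hG

lemma witSet_finite {Γ F} : (witSet Γ F).Finite := by
  cases F with
  | ex x A => simp only [witSet]; exact Set.finite_singleton _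
  | neg B =>
      cases B with
      | all x A => simp only [witSet]; exact Set.finite_singleton _
      | pred Q args => simp only [witSet]; exact Set.finite_empty
      | neg C => simp only [witSet]; exact Set.finite_empty
      | imp C D => simp only [witSet]; exact Set.finite_empty
      | ex y C => simp only [witSet]; exact Set.finite_empty
      | just t X C => simp only [witSet]; exact Set.finite_empty
  | pred Q args => simp only [witSet]; exact Set.finite_empty
  | imp C D => simp only [witSet]; exact Set.finite_empty
  | all y C => simp only [witSet]; exact Set.finite_empty
  | just t X C => simp only [witSet]; exact Set.finite_empty

lemma extendStep_pfin {CS Γ F} (hP : PFin Γ) : PFin (extendStep CS Γ F) := by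
  rw [extendStep]
  split_ifs with h
  · have h1 : PFin (insert F Γ) := pfin_insert hP F
    rw [PFin, Set.biUnion_union]
    exact (witSet_finite.biUnion (fun G _ => G.kocc.finite_toSet)).union h1
  · exact hP

lemma exwit_mem {CS Γ} {x : ℕ} {A : Fm ℕ} (hcl : (Fm.ex x A).Closed)
    (hcons : TabConsistent CS (insert (Fm.ex x A) Γ)) :
    ∃ u, (A.subst1 x u) ∈ extendStep CS Γ (Fm.ex x A) := by
  refine ⟨freshPar (insert (Fm.ex x A) Γ), ?_⟩
  rw [extendStep, if_pos ⟨hcl, hcons⟩]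
  refine Set.mem_union_left _ ?_
  simp only [witSet]
  exact rfl

lemma allwit_mem {CS Γ} {x : ℕ} {A : Fm ℕ} (hcl : (Fm.neg (Fm.all x A)).Closed)
    (hcons : TabConsistent CS (insert (Fm.neg (Fm.all x A)) Γ)) :
    ∃ u, Fm.neg (A.subst1 x u) ∈ extendStep CS Γ (Fm.neg (Fm.all x A)) := by
  refine ⟨freshPar (insert (Fm.neg (Fm.all x A)) Γ), ?_⟩
  rw [extendStep, if_pos ⟨hcl, hcons⟩]
  refine Set.mem_union_left _ ?_
  simp only [witSet]
  exact rfl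

noncomputable def chainSeq (CS : Set (ℕ × Fm Empty)) (Γb : Set (Fm ℕ)) (e : ℕ → Fm ℕ) :
    ℕ → Set (Fm ℕ)
  | 0 => Γb
  | n + 1 => extendStep CS (chainSeq CS Γb e n) (e n)

lemma chainSeq_mono {CS Γb e} : ∀ {m n : ℕ}, m ≤ n → chainSeq CS Γb e m ⊆ chainSeq CS Γb e n := by
  intro m n h
  induction n with
  | zero => rw [Nat.le_zero.mp h]
  | succ n ih =>
      rcases Nat.lt_or_ge m (n + 1) with h' | h'
      · exact (ih (Nat.lt_succ_iff.mp h')).trans subset_extendStep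
      · rw [Nat.le_antisymm h h']

lemma finite_subset_chain {α : Type} {Γ : ℕ → Set α}
    (mono : ∀ {m n : ℕ}, m ≤ n → Γ m ⊆ Γ n) {S : Set α} (hfin : S.Finite)
    (h : S ⊆ ⋃ n, Γ n) : ∃ n, S ⊆ Γ n := by
  revert h
  refine Set.Finite.induction_on (motive := fun S _ => S ⊆ (⋃ n, Γ n) → ∃ n, S ⊆ Γ n) S hfin ?_ ?_
  · intro _; exact ⟨0, Set.empty_subset _⟩
  · intro a s _ _ ih hsub
    obtain ⟨n, hn⟩ := ih ((Set.subset_insert a s).trans hsub)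
    obtain ⟨m, hm⟩ := Set.mem_iUnion.mp (hsub (Set.mem_insert a s))
    exact ⟨max n m, Set.insert_subset (mono (le_max_right n m) hm)
      (hn.trans (mono (le_max_left n m)))⟩

end Aux

/-- Lindenbaum lemma.  Every tableau `FOLP_CS`-consistent set of
FOLP sentences extends to a tableau consistent, maximal and E-complete set of
closed Par-formulas. -/
theorem extend_to_maximal_Ecomplete
    (CS : Set (ℕ × Fm Empty)) (hCS : ConstantSpec CS)
    (Γ₀ : Set (Fm Empty)) (hsen : ∀ F ∈ Γ₀, F.Closed)
    (hcons : TabConsistent CS (toK '' Γ₀)) :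
    ∃ Γ : Set (Fm ℕ), toK '' Γ₀ ⊆ Γ ∧ (∀ F ∈ Γ, F.Closed) ∧
      MaximalCons CS Γ ∧ EComplete Γ := by
  haveI : Nonempty (Fm ℕ) := ⟨Fm.pred 0 []⟩
  obtain ⟨e, he⟩ := exists_surjective_nat (Fm ℕ)
  set Γb : Set (Fm ℕ) := toK '' Γ₀ with hΓb
  set Γs : ℕ → Set (Fm ℕ) := chainSeq CS Γb e with hΓs
  have hbase_closed : ∀ F ∈ Γb, Fm.Closed F := by
    rintro F ⟨G, hG, rfl⟩
    show (toK G).fvar = ∅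
    rw [fvar_toK]
    exact hsen G hG
  have hbase_pfin : PFin Γb := by
    refine Set.Finite.subset (Set.finite_empty) ?_
    rintro u hu
    simp only [Set.mem_iUnion] at hu
    obtain ⟨F, ⟨G, hG, rfl⟩, hu⟩ := hu
    rw [Finset.mem_coe, kocc_toK] at hu
    exact absurd hu (Finset.notMem_empty u)
  have hinv : ∀ n, TabConsistent CS (Γs n) ∧ (∀ F ∈ Γs n, Fm.Closed F) ∧ PFin (Γs n) := by
    intro n
    induction n with
    | zero => exact ⟨hcons, hbase_closed, hbase_pfin⟩
    | succ n ih =>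
        exact ⟨extendStep_consistent ih.2.2 ih.1, extendStep_closed ih.2.1,
          extendStep_pfin ih.2.2⟩
  have hmono : ∀ {m n : ℕ}, m ≤ n → Γs m ⊆ Γs n := fun h => chainSeq_mono h
  have hUcons : TabConsistent CS (⋃ n, Γs n) := by
    intro S hS hfin
    obtain ⟨n, hn⟩ := finite_subset_chain (fun h => hmono h) hfin hS
    exact (hinv n).1 S hn hfin
  have hUcl : ∀ F ∈ ⋃ n, Γs n, Fm.Closed F := by
    intro F hF
    obtain ⟨n, hn⟩ := Set.mem_iUnion.mp hF
    exact (hinv n).2.1 F hn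
  refine ⟨⋃ n, Γs n, ?_, hUcl, ?_, ?_⟩
  · exact (subset_rfl : Γb ⊆ Γs 0).trans (Set.subset_iUnion Γs 0)
  · refine ⟨hUcons, ?_⟩
    intro Δ hsub hcl hΔcons
    refine Set.Subset.antisymm ?_ hsub
    intro F hF
    obtain ⟨n, hn⟩ := he F
    subst hn
    have h1 : insert (e n) (Γs n) ⊆ Δ :=
      Set.insert_subset hF ((Set.subset_iUnion Γs n).trans hsub)
    have h2 : TabConsistent CS (insert (e n) (Γs n)) := tabcons_mono h1 hΔcons
    have h3 : e n ∈ Γs (n + 1) := mem_extendStep (hcl _ hF) h2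
    exact Set.mem_iUnion.mpr ⟨n + 1, h3⟩
  · constructor
    · intro x A hA
      obtain ⟨n, hn⟩ := he (Fm.ex x A)
      have h1 : insert (Fm.ex x A) (Γs n) ⊆ ⋃ m, Γs m :=
        Set.insert_subset hA (Set.subset_iUnion Γs n)
      have h2 : TabConsistent CS (insert (Fm.ex x A) (Γs n)) := tabcons_mono h1 hUcons
      obtain ⟨u, hu⟩ := exwit_mem (hUcl _ hA) h2
      refine ⟨u, Set.mem_iUnion.mpr ⟨n + 1, ?_⟩⟩
      show A.subst1 x u ∈ extendStep CS (Γs n) (e n)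
      rw [hn]
      exact hu
    · intro x A hA
      obtain ⟨n, hn⟩ := he (Fm.neg (Fm.all x A))
      have h1 : insert (Fm.neg (Fm.all x A)) (Γs n) ⊆ ⋃ m, Γs m :=
        Set.insert_subset hA (Set.subset_iUnion Γs n)
      have h2 : TabConsistent CS (insert (Fm.neg (Fm.all x A)) (Γs n)) :=
        tabcons_mono h1 hUcons
      obtain ⟨u, hu⟩ := allwit_mem (hUcl _ hA) h2
      refine ⟨u, Set.mem_iUnion.mpr ⟨n + 1, ?_⟩⟩
      show Fm.neg (A.subst1 x u) ∈ extendStep CS (Γs n) (e n)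
      rw [hn]
      exact hu
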